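/- The map F : ℝ^n → ℝ^n, C ↦ (F_1(C), …, F_n(C)), is continuous on all of ℝ^n. -/

import Mathlib

open MeasureTheory Set
open scoped Classical

/-- `f_j^{(C)}(t) = C_j - (t - x_j)^2`. -/
noncomputable def fj (n : ℕ) (x C : Fin n → ℝ) (j : Fin n) (t : ℝ) : ℝ :=
  C j - (t - x j) ^ 2

/-- `f^{(C)}(t) = max{f_1^{(C)}(t), …, f_n^{(C)}(t), 0}`. -/
noncomputable def fmax (n : ℕ) (x C : Fin n → ℝ) (t : ℝ) : ℝ :=
  max (⨆ j : Fin n, fj n x C j t) 0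

/-- `E_j^{(C)} = {t : f_j^{(C)}(t) = f^{(C)}(t)}`. -/
def Ej (n : ℕ) (x C : Fin n → ℝ) (j : Fin n) : Set ℝ :=
  {t | fj n x C j t = fmax n x C t}

/-- `F_j(C) = ∫_{E_j^{(C)}} f^{(C)}` if `E_j^{(C)} ≠ ∅`, else `0`. -/
noncomputable def Fj (n : ℕ) (x C : Fin n → ℝ) (j : Fin n) : ℝ :=
  if (Ej n x C j).Nonempty then ∫ t in Ej n x C j, fmax n x C t else 0

/-- `F(C) = (F_1(C), …, F_n(C))`. -/
noncomputable def Fvec (n : ℕ) (x C : Fin n → ℝ) : Fin n → ℝ :=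
  fun j => Fj n x C j

/-- `𝔾 = {C : F_j(C) > 0 for all j}`. -/
def Gset (n : ℕ) (x : Fin n → ℝ) : Set (Fin n → ℝ) :=
  {C | ∀ j, 0 < Fj n x C j}

/-- `γ_{ij}(C) = (C_i - C_j)/(2(x_j - x_i)) + (x_i + x_j)/2`. -/
noncomputable def gam (n : ℕ) (x C : Fin n → ℝ) (i j : Fin n) : ℝ :=
  (C i - C j) / (2 * (x j - x i)) + (x i + x j) / 2

section lemmas
variable {n : ℕ} {x : Fin n → ℝ}

lemma continuous_fj_pair (j : Fin n) :
    Continuous (fun p : (Fin n → ℝ) × ℝ => fj n x p.1 j p.2) := by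
  unfold fj; fun_prop

lemma continuous_fmax_pair [Nonempty (Fin n)] :
    Continuous (fun p : (Fin n → ℝ) × ℝ => fmax n x p.1 p.2) := by
  have h : ∀ p : (Fin n → ℝ) × ℝ, fmax n x p.1 p.2
      = max (Finset.univ.sup' Finset.univ_nonempty (fun j => fj n x p.1 j p.2)) 0 := by
    intro p
    rw [fmax, Finset.sup'_univ_eq_ciSup]
  simp only [h]
  exact (Continuous.finset_sup'_apply _ fun j _ => continuous_fj_pair j).max continuous_const

lemma fmax_nonneg (C : Fin n → ℝ) (t : ℝ) : 0 ≤ fmax n x C t := le_max_right _ _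

lemma fj_le_fmax [Nonempty (Fin n)] (C : Fin n → ℝ) (j : Fin n) (t : ℝ) :
    fj n x C j t ≤ fmax n x C t :=
  le_trans (le_ciSup (f := fun k => fj n x C k t) (Set.Finite.bddAbove (Set.finite_range _)) j)
    (le_max_left _ _)

lemma fmax_le [Nonempty (Fin n)] {C : Fin n → ℝ} {M : ℝ} (hM : 0 ≤ M) (h : ∀ j, C j ≤ M)
    (t : ℝ) : fmax n x C t ≤ M := by
  refine max_le (ciSup_le fun j => ?_) hM
  have : fj n x C j t ≤ C j := by
    rw [fj]; nlinarith [sq_nonneg (t - x j)]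
  exact this.trans (h j)

lemma measurableSet_Ej [Nonempty (Fin n)] (C : Fin n → ℝ) (j : Fin n) :
    MeasurableSet (Ej n x C j) := by
  have : IsClosed (Ej n x C j) := by
    refine isClosed_eq ?_ ?_
    · exact (continuous_fj_pair j).comp (continuous_const.prodMk continuous_id)
    · exact continuous_fmax_pair.comp (continuous_const.prodMk continuous_id)
  exact this.measurableSet

lemma Fj_eq_integral [Nonempty (Fin n)] (C : Fin n → ℝ) (j : Fin n) :
    Fj n x C j = ∫ t, (Ej n x C j).indicator (fmax n x C) t := by
  rw [Fj, integral_indicator (measurableSet_Ej C j)]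
  split_ifs with h
  · rfl
  · rw [not_nonempty_iff_eq_empty.mp h]
    simp

lemma tie_eq_gam (hxinj : Function.Injective x) {j k : Fin n} (hjk : j ≠ k)
    {C : Fin n → ℝ} {t : ℝ} (h : fj n x C j t = fj n x C k t) :
    t = gam n x C j k := by
  have hne : x k - x j ≠ 0 := sub_ne_zero.mpr fun he => hjk (hxinj he.symm)
  rw [fj, fj] at h
  rw [gam]
  field_simp
  ring_nf
  ring_nf at h
  nlinarith [h]

lemma continuousAt_indicator [Nonempty (Fin n)] (hxinj : Function.Injective x)
    (j : Fin n) (C₀ : Fin n → ℝ) {t : ℝ}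
    (ht : ∀ k, t ≠ gam n x C₀ j k) :
    ContinuousAt (fun C => (Ej n x C j).indicator (fmax n x C) t) C₀ := by
  have hind : ∀ C : Fin n → ℝ, (Ej n x C j).indicator (fmax n x C) t
      = if fj n x C j t = fmax n x C t then fmax n x C t else 0 := by
    intro C; rw [Set.indicator_apply]; rfl
  simp only [hind]
  have hcfj : ∀ k, ContinuousAt (fun C : Fin n → ℝ => fj n x C k t) C₀ :=
    fun k => ((continuous_fj_pair k).comp (continuous_id.prodMk continuous_const)).continuousAt
  have hcfm : ContinuousAt (fun C : Fin n → ℝ => fmax n x C t) C₀ :=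
    (continuous_fmax_pair.comp (continuous_id.prodMk continuous_const)).continuousAt
  rcases lt_or_eq_of_le (fj_le_fmax (x := x) C₀ j t) with hlt | heq
  · have hev : ∀ᶠ C in nhds C₀, fj n x C j t < fmax n x C t :=
      (hcfj j).eventually_lt hcfm hlt
    have hEq : (fun _ : Fin n → ℝ => (0:ℝ))
        =ᶠ[nhds C₀] fun C => if fj n x C j t = fmax n x C t then fmax n x C t else 0 := by
      filter_upwards [hev] with C hC
      rw [if_neg (ne_of_lt hC)]
    exact continuousAt_const.congr hEq
  · rcases eq_or_lt_of_le (fmax_nonneg (x := x) C₀ t) with hm0 | hmpos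
    · have h0 : (if fj n x C₀ j t = fmax n x C₀ t then fmax n x C₀ t else 0) = 0 := by
        rw [if_pos heq]; exact hm0.symm
      rw [ContinuousAt, h0]
      refine squeeze_zero' (g := fun C => fmax n x C t)
        (Filter.Eventually.of_forall fun C => ?_)
        (Filter.Eventually.of_forall fun C => ?_) ?_
      · split_ifs with h <;> first | exact fmax_nonneg C t | exact le_refl 0
      · split_ifs with h <;> first | exact le_refl _ | exact fmax_nonneg C t
      · have := hcfm
        rw [ContinuousAt, ← hm0] at this
        exact this
    · -- fmax C₀ t > 0, fj j = fmax
      have hjpos : 0 < fj n x C₀ j t := heq ▸ hmpos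
      have hklt : ∀ k, k ≠ j → fj n x C₀ k t < fj n x C₀ j t := by
        intro k hk
        have hle : fj n x C₀ k t ≤ fj n x C₀ j t :=
          (fj_le_fmax (x := x) C₀ k t).trans heq.ge
        rcases lt_or_eq_of_le hle with h | h
        · exact h
        · exact absurd (tie_eq_gam hxinj (Ne.symm hk) h.symm) (ht k)
      have hev1 : ∀ᶠ C in nhds C₀, ∀ k, fj n x C k t ≤ fj n x C j t := by
        rw [Filter.eventually_all]
        intro k
        by_cases hk : k = j
        · subst hk; exact Filter.Eventually.of_forall fun _ => le_refl _
        · filter_upwards [(hcfj k).eventually_lt (hcfj j) (hklt k hk)] with C hC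
          exact le_of_lt hC
      have hev2 : ∀ᶠ C in nhds C₀, 0 < fj n x C j t :=
        continuousAt_const.eventually_lt (hcfj j) hjpos
      have hEq : (fun C : Fin n → ℝ => fmax n x C t)
          =ᶠ[nhds C₀] fun C => if fj n x C j t = fmax n x C t then fmax n x C t else 0 := by
        filter_upwards [hev1, hev2] with C h1 h2
        have hsup : (⨆ k, fj n x C k t) = fj n x C j t :=
          le_antisymm (ciSup_le h1)
            (le_ciSup (f := fun k => fj n x C k t) (Set.Finite.bddAbove (Set.finite_range _)) j)
        have hfm : fmax n x C t = fj n x C j t := by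
          rw [fmax, hsup, max_eq_left (le_of_lt h2)]
        rw [if_pos hfm.symm]
      exact hcfm.congr hEq

end lemmas

/-- The map `F : ℝ^n → ℝ^n` is continuous. -/
theorem stmt_17 (n : ℕ) (hn : 1 ≤ n) (x : Fin n → ℝ) (hx : StrictMono x) :
    Continuous (fun C : Fin n → ℝ => Fvec n x C) := by
  show Continuous (fun C : Fin n → ℝ => (fun j => Fj n x C j))
  haveI : Nonempty (Fin n) := Fin.pos_iff_nonempty.mp (by omega)
  have hxinj := hx.injective
  refine continuous_pi fun j => ?_
  have heqF : (fun C : Fin n → ℝ => Fj n x C j)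
      = fun C => ∫ t, (Ej n x C j).indicator (fmax n x C) t := by
    funext C; exact Fj_eq_integral C j
  rw [heqF, continuous_iff_continuousAt]
  intro C₀
  set M : ℝ := ‖C₀‖ + 1 with hM
  have hM0 : (0:ℝ) < M := by positivity
  have hball : ∀ᶠ C in nhds C₀, ‖C‖ ≤ M := by
    filter_upwards [Metric.ball_mem_nhds C₀ one_pos] with C hC
    have h1 : ‖C - C₀‖ < 1 := by rwa [mem_ball_iff_norm] at hC
    calc ‖C‖ = ‖C₀ + (C - C₀)‖ := by congr 1; abel
      _ ≤ ‖C₀‖ + ‖C - C₀‖ := norm_add_le _ _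
      _ ≤ M := by rw [hM]; linarith
  refine continuousAt_of_dominated (bound :=
    (Icc (x j - Real.sqrt M) (x j + Real.sqrt M)).indicator (fun _ => M)) ?_ ?_ ?_ ?_
  · refine Filter.Eventually.of_forall fun C => ?_
    have hc : Continuous (fmax n x C) :=
      continuous_fmax_pair.comp (continuous_const.prodMk continuous_id)
    exact (hc.stronglyMeasurable.indicator (measurableSet_Ej C j)).aestronglyMeasurable
  · filter_upwards [hball] with C hC
    refine Filter.Eventually.of_forall fun t => ?_
    have hCj : ∀ k, C k ≤ M := fun k => (le_abs_self _).trans ((norm_le_pi_norm C k).trans hC)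
    by_cases htI : t ∈ Icc (x j - Real.sqrt M) (x j + Real.sqrt M)
    · rw [indicator_of_mem htI]
      have h1 : (Ej n x C j).indicator (fmax n x C) t ≤ M := by
        rw [Set.indicator_apply]
        split_ifs with h
        · exact fmax_le (le_of_lt hM0) hCj t
        · exact le_of_lt hM0
      have h2 : 0 ≤ (Ej n x C j).indicator (fmax n x C) t :=
        Set.indicator_nonneg (fun s _ => fmax_nonneg C s) t
      rw [Real.norm_eq_abs, abs_of_nonneg h2]
      exact h1
    · rw [indicator_of_notMem htI]
      have hnot : t ∉ Ej n x C j := by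
        intro hmem
        have h1 : fj n x C j t = fmax n x C t := hmem
        have h2 : 0 ≤ fj n x C j t := h1 ▸ fmax_nonneg C t
        have h3 : (t - x j) ^ 2 ≤ M := by
          rw [fj] at h2
          have := hCj j
          linarith
        have h4 : |t - x j| ≤ Real.sqrt M := by
          rw [← Real.sqrt_sq_eq_abs]
          exact Real.sqrt_le_sqrt h3
        rcases abs_le.mp h4 with ⟨ha, hb⟩
        exact htI ⟨by linarith, by linarith⟩
      rw [indicator_of_notMem hnot, norm_zero]
  · rw [integrable_indicator_iff measurableSet_Icc]
    exact integrableOn_const measure_Icc_lt_top.ne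
  · have hnull : volume (⋃ k, {gam n x C₀ j k}) = 0 :=
      measure_iUnion_null fun k => measure_singleton _
    have hae : ∀ᵐ t : ℝ, t ∉ ⋃ k, ({gam n x C₀ j k} : Set ℝ) :=
      measure_eq_zero_iff_ae_notMem.mp hnull
    filter_upwards [hae] with t ht
    refine continuousAt_indicator hxinj j C₀ fun k hk => ?_
    exact ht (Set.mem_iUnion.mpr ⟨k, by simp [hk]⟩)
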